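/- Let d ≥ 2 be an integer and n a real number with n > d/2 + 1. Then sup_{k ∈ Z^d_0} G_n(k) < ∞, where G_n(k) := Σ_{h∈Z^d_{0k}} |h ∧ k|² (|k|^n − |k−h|^n)² / (|h|^{2n+2} |k−h|^{2n}). -/

import Mathlib

noncomputable section

/-- Bernoulli-type: for `0 ≤ y ≤ x` and `1 ≤ p`, `x^p - y^p ≤ p (x-y) x^(p-1)`. -/
lemma rpow_sub_rpow_le {x y p : ℝ} (hy : 0 ≤ y) (hxy : y ≤ x) (hp : 1 ≤ p) :
    x ^ p - y ^ p ≤ p * (x - y) * x ^ (p - 1) := by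
  have hx : 0 ≤ x := hy.trans hxy
  rcases eq_or_lt_of_le hx with hx0 | hx0
  · have hy0 : y = 0 := le_antisymm (hx0 ▸ hxy) hy
    rw [← hx0, hy0]
    simp [Real.zero_rpow (by linarith : p ≠ 0)]
  · set t := y / x with ht
    have ht0 : 0 ≤ t := div_nonneg hy hx0.le
    have hb := one_add_mul_self_le_rpow_one_add (by linarith : (-1:ℝ) ≤ t - 1) hp
    have h1t : 1 + (t - 1) = t := by ring
    rw [h1t] at hb
    have hyx : y = t * x := by rw [ht, div_mul_cancel₀ _ hx0.ne']
    have hyp : y ^ p = t ^ p * x ^ p := by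
      rw [hyx, Real.mul_rpow ht0 hx0.le]
    have hxp : x ^ p = x * x ^ (p - 1) := by
      rw [← Real.rpow_one_add' hx0.le (by linarith : 1 + (p-1) ≠ 0)]
      ring_nf
    have hxp0 : 0 < x ^ p := Real.rpow_pos_of_pos hx0 _
    have : (1 + p * (t - 1)) * x ^ p ≤ y ^ p := by
      rw [hyp]
      exact mul_le_mul_of_nonneg_right hb hxp0.le
    have key : x ^ p - y ^ p ≤ p * (1 - t) * x ^ p := by nlinarith
    calc x ^ p - y ^ p ≤ p * (1 - t) * x ^ p := key
      _ = p * (x - y) * x ^ (p - 1) := by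
          rw [hxp, hyx]; ring

/-- Core pointwise estimate. -/
lemma core_ineq {a b c p W : ℝ} (ha : 1 ≤ a) (hb : 1 ≤ b) (hc : 0 ≤ c) (hp : 1 ≤ p)
    (h1 : c ≤ a + b) (h2 : |c - b| ≤ a) (hW : W ≤ a ^ 2 * b ^ 2) :
    W * (c ^ p - b ^ p) ^ 2 / (a ^ (2*p+2) * b ^ (2*p)) ≤
      p ^ 2 * 2 ^ (2*p-2) * (a ^ (-(2*p-2)) + b ^ (-(2*p-2))) := by
  have ha0 : (0:ℝ) < a := lt_of_lt_of_le one_pos ha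
  have hb0 : (0:ℝ) < b := lt_of_lt_of_le one_pos hb
  have hab0 : (0:ℝ) < a + b := by linarith
  have hq0 : (0:ℝ) ≤ 2*p - 2 := by linarith
  -- |c^p - b^p| ≤ p * a * (a+b)^(p-1)
  have habs : |c ^ p - b ^ p| ≤ p * a * (a + b) ^ (p - 1) := by
    have hmono : ∀ x y : ℝ, 0 ≤ x → x ≤ y → x ^ (p-1) ≤ y ^ (p-1) :=
      fun x y hx hxy => Real.rpow_le_rpow hx hxy (by linarith)
    rcases le_total b c with hbc | hbc
    · have h3 : c - b ≤ a := (abs_le.mp h2).2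
      have h4 : c ^ p - b ^ p ≤ p * (c - b) * c ^ (p-1) := rpow_sub_rpow_le hb0.le hbc hp
      have h5 : b ^ p ≤ c ^ p := Real.rpow_le_rpow hb0.le hbc (by linarith)
      rw [abs_of_nonneg (by linarith)]
      calc c ^ p - b ^ p ≤ p * (c - b) * c ^ (p-1) := h4
        _ ≤ p * a * (a + b) ^ (p-1) := by
            apply mul_le_mul (by nlinarith) (hmono _ _ hc h1) (Real.rpow_nonneg hc _)
              (by positivity)
    · have h3 : b - c ≤ a := by
        have := (abs_le.mp h2).1; linarith
      have h4 : b ^ p - c ^ p ≤ p * (b - c) * b ^ (p-1) := rpow_sub_rpow_le hc hbc hp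
      have h5 : c ^ p ≤ b ^ p := Real.rpow_le_rpow hc hbc (by linarith)
      rw [abs_of_nonpos (by linarith)]
      calc -(c ^ p - b ^ p) = b ^ p - c ^ p := by ring
        _ ≤ p * (b - c) * b ^ (p-1) := h4
        _ ≤ p * a * (a + b) ^ (p-1) := by
            apply mul_le_mul (by nlinarith) (hmono _ _ hb0.le (by linarith))
              (Real.rpow_nonneg hb0.le _) (by positivity)
  -- square it
  have hsq : (c ^ p - b ^ p) ^ 2 ≤ p ^ 2 * a ^ 2 * (a + b) ^ (2*p-2) := by
    have h6 : (c ^ p - b ^ p) ^ 2 = |c ^ p - b ^ p| ^ 2 := (sq_abs _).symm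
    have h7 : |c ^ p - b ^ p| ^ 2 ≤ (p * a * (a + b) ^ (p-1)) ^ 2 :=
      pow_le_pow_left₀ (abs_nonneg _) habs 2
    have h8 : ((a + b) ^ (p-1)) ^ 2 = (a + b) ^ (2*p-2) := by
      rw [← Real.rpow_natCast ((a+b) ^ (p-1)) 2, ← Real.rpow_mul hab0.le]
      norm_num; ring_nf
    calc (c ^ p - b ^ p) ^ 2 ≤ (p * a * (a + b) ^ (p-1)) ^ 2 := h6 ▸ h7
      _ = p ^ 2 * a ^ 2 * ((a + b) ^ (p-1)) ^ 2 := by ring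
      _ = p ^ 2 * a ^ 2 * (a + b) ^ (2*p-2) := by rw [h8]
  -- (a+b)^(2p-2) ≤ 2^(2p-2) (a^(2p-2) + b^(2p-2))
  have hsum : (a + b) ^ (2*p-2) ≤ 2 ^ (2*p-2) * (a ^ (2*p-2) + b ^ (2*p-2)) := by
    have hm : a + b ≤ 2 * max a b := by
      rcases max_cases a b with ⟨h, h'⟩ | ⟨h, h'⟩ <;> rw [h] <;> linarith
    have hmax0 : (0:ℝ) < max a b := lt_max_of_lt_left ha0
    calc (a + b) ^ (2*p-2) ≤ (2 * max a b) ^ (2*p-2) :=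
          Real.rpow_le_rpow hab0.le hm hq0
      _ = 2 ^ (2*p-2) * (max a b) ^ (2*p-2) := Real.mul_rpow (by norm_num) hmax0.le
      _ ≤ 2 ^ (2*p-2) * (a ^ (2*p-2) + b ^ (2*p-2)) := by
          apply mul_le_mul_of_nonneg_left _ (Real.rpow_nonneg (by norm_num) _)
          rcases max_cases a b with ⟨h, h'⟩ | ⟨h, h'⟩ <;> rw [h]
          · nlinarith [Real.rpow_nonneg hb0.le (2*p-2)]
          · nlinarith [Real.rpow_nonneg ha0.le (2*p-2)]
  -- numerator bound
  have hnum : W * (c ^ p - b ^ p) ^ 2 ≤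
      a ^ 2 * b ^ 2 * (p ^ 2 * a ^ 2 * (2 ^ (2*p-2) * (a ^ (2*p-2) + b ^ (2*p-2)))) := by
    calc W * (c ^ p - b ^ p) ^ 2 ≤ a ^ 2 * b ^ 2 * (c ^ p - b ^ p) ^ 2 :=
          mul_le_mul_of_nonneg_right hW (sq_nonneg _)
      _ ≤ a ^ 2 * b ^ 2 * (p ^ 2 * a ^ 2 * (2 ^ (2*p-2) * (a ^ (2*p-2) + b ^ (2*p-2)))) := by
          apply mul_le_mul_of_nonneg_left _ (by positivity)
          calc (c ^ p - b ^ p) ^ 2 ≤ p ^ 2 * a ^ 2 * (a + b) ^ (2*p-2) := hsq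
            _ ≤ p ^ 2 * a ^ 2 * (2 ^ (2*p-2) * (a ^ (2*p-2) + b ^ (2*p-2))) :=
                mul_le_mul_of_nonneg_left hsum (by positivity)
  -- denominators
  have hden : (0:ℝ) < a ^ (2*p+2) * b ^ (2*p) :=
    mul_pos (Real.rpow_pos_of_pos ha0 _) (Real.rpow_pos_of_pos hb0 _)
  have ea : a ^ (2*p+2) = a ^ (2:ℝ) * (a ^ (2:ℝ) * a ^ (2*p-2)) := by
    rw [← Real.rpow_add ha0, ← Real.rpow_add ha0]; congr 1; ring
  have eb : b ^ (2*p) = b ^ (2:ℝ) * b ^ (2*p-2) := by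
    rw [← Real.rpow_add hb0]; congr 1; ring
  have hP : (0:ℝ) < a ^ (2*p-2) := Real.rpow_pos_of_pos ha0 _
  have hQ : (0:ℝ) < b ^ (2*p-2) := Real.rpow_pos_of_pos hb0 _
  have hfin : a ^ 2 * b ^ 2 * (p ^ 2 * a ^ 2 * (2 ^ (2*p-2) * (a ^ (2*p-2) + b ^ (2*p-2)))) /
      (a ^ (2*p+2) * b ^ (2*p)) =
      p ^ 2 * 2 ^ (2*p-2) * (a ^ (-(2*p-2)) + b ^ (-(2*p-2))) := by
    rw [ea, eb, Real.rpow_neg ha0.le, Real.rpow_neg hb0.le, Real.rpow_two, Real.rpow_two]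
    field_simp
    ring
  rw [← hfin]
  exact div_le_div_of_nonneg_right hnum hden.le

/-- Euclidean norm of a lattice point of `ℤ^d`. -/
def znorm {d : ℕ} (k : Fin d → ℤ) : ℝ := Real.sqrt (∑ i, ((k i : ℝ)) ^ 2)

/-- Squared norm `|h ∧ k|² = |h|²|k|² − (h·k)²` of the exterior product. -/
def wedgeSq {d : ℕ} (h k : Fin d → ℤ) : ℝ :=
  (∑ i, ((h i : ℝ)) ^ 2) * (∑ i, ((k i : ℝ)) ^ 2) - (∑ i, (h i : ℝ) * (k i : ℝ)) ^ 2

/-- The function `G_n : ℤ^d_0 → [0,∞]` of the paper: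
`G_n(k) = Σ_{h ∈ ℤ^d_{0k}} |h ∧ k|² (|k|^n − |k−h|^n)² / (|h|^{2n+2}|k−h|^{2n})`. -/
def Gn (d : ℕ) (n : ℝ) (k : Fin d → ℤ) : ENNReal :=
  ∑' h : {h : Fin d → ℤ // h ≠ 0 ∧ h ≠ k},
    ENNReal.ofReal (wedgeSq h.1 k * (znorm k ^ n - znorm (k - h.1) ^ n) ^ 2 /
      (znorm h.1 ^ (2 * n + 2) * znorm (k - h.1) ^ (2 * n)))

/-- Embedding of `ℤ^d` into Euclidean space. -/
def emb {d : ℕ} (k : Fin d → ℤ) : EuclideanSpace ℝ (Fin d) := WithLp.toLp 2 (fun i => (k i : ℝ))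

lemma znorm_nonneg {d : ℕ} (k : Fin d → ℤ) : 0 ≤ znorm k := Real.sqrt_nonneg _

lemma znorm_eq_norm {d : ℕ} (k : Fin d → ℤ) : znorm k = ‖emb k‖ := by
  rw [EuclideanSpace.norm_eq]
  unfold znorm
  congr 1
  refine Finset.sum_congr rfl fun i _ => ?_
  rw [Real.norm_eq_abs, sq_abs]; rfl

lemma emb_sub {d : ℕ} (k h : Fin d → ℤ) : emb (k - h) = emb k - emb h := by
  ext i
  simp [emb]

lemma znorm_sq {d : ℕ} (k : Fin d → ℤ) : znorm k ^ 2 = ∑ i, ((k i : ℝ)) ^ 2 :=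
  Real.sq_sqrt (Finset.sum_nonneg fun i _ => sq_nonneg _)

lemma one_le_znorm {d : ℕ} {h : Fin d → ℤ} (hh : h ≠ 0) : 1 ≤ znorm h := by
  obtain ⟨i, hi⟩ := Function.ne_iff.mp hh
  have h1 : (1:ℝ) ≤ ((h i : ℝ)) ^ 2 := by
    have : (1:ℤ) ≤ (h i) ^ 2 := by
      rcases lt_or_gt_of_ne (by simpa using hi) with h' | h' <;> nlinarith
    exact_mod_cast this
  have h2 : (1:ℝ) ≤ ∑ j, ((h j : ℝ)) ^ 2 :=
    h1.trans (Finset.single_le_sum (fun j _ => sq_nonneg ((h j : ℝ))) (Finset.mem_univ i))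
  calc (1:ℝ) = Real.sqrt 1 := (Real.sqrt_one).symm
    _ ≤ znorm h := Real.sqrt_le_sqrt h2

lemma abs_le_znorm {d : ℕ} (h : Fin d → ℤ) (i : Fin d) : |(h i : ℝ)| ≤ znorm h := by
  rw [← Real.sqrt_sq_eq_abs]
  exact Real.sqrt_le_sqrt (Finset.single_le_sum (fun j _ => sq_nonneg ((h j : ℝ)))
    (Finset.mem_univ i))

lemma wedgeSq_sub {d : ℕ} (h k : Fin d → ℤ) : wedgeSq h k = wedgeSq h (k - h) := by
  unfold wedgeSq
  have e1 : ∑ i, (((k - h) i : ℝ)) ^ 2 =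
      ∑ i, ((k i : ℝ)) ^ 2 - 2 * ∑ i, (h i : ℝ) * (k i : ℝ) + ∑ i, ((h i : ℝ)) ^ 2 := by
    have step : ∑ i, (((k - h) i : ℝ)) ^ 2 =
        ∑ i, (((k i : ℝ)) ^ 2 - 2 * ((h i : ℝ) * (k i : ℝ)) + ((h i : ℝ)) ^ 2) := by
      refine Finset.sum_congr rfl fun i _ => ?_
      push_cast [Pi.sub_apply]
      ring
    rw [step, Finset.sum_add_distrib, Finset.sum_sub_distrib, ← Finset.mul_sum]
  have e2 : ∑ i, (h i : ℝ) * (((k - h) i : ℝ)) =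
      ∑ i, (h i : ℝ) * (k i : ℝ) - ∑ i, ((h i : ℝ)) ^ 2 := by
    have step : ∑ i, (h i : ℝ) * (((k - h) i : ℝ)) =
        ∑ i, ((h i : ℝ) * (k i : ℝ) - ((h i : ℝ)) ^ 2) := by
      refine Finset.sum_congr rfl fun i _ => ?_
      push_cast [Pi.sub_apply]
      ring
    rw [step, Finset.sum_sub_distrib]
  rw [e1, e2]
  ring

lemma wedgeSq_le {d : ℕ} (h k : Fin d → ℤ) : wedgeSq h k ≤ znorm h ^ 2 * znorm k ^ 2 := by
  rw [znorm_sq, znorm_sq]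
  unfold wedgeSq
  nlinarith [sq_nonneg (∑ i, (h i : ℝ) * (k i : ℝ))]

/-- The pointwise term bound, uniform in `k`. -/
lemma term_le {d : ℕ} {n : ℝ} (hn : 1 ≤ n) (k h : Fin d → ℤ) (hh0 : h ≠ 0) (hhk : h ≠ k) :
    wedgeSq h k * (znorm k ^ n - znorm (k - h) ^ n) ^ 2 /
      (znorm h ^ (2 * n + 2) * znorm (k - h) ^ (2 * n)) ≤
    n ^ 2 * 2 ^ (2*n-2) * (znorm h ^ (-(2*n-2)) + znorm (k - h) ^ (-(2*n-2))) := by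
  have hkh0 : k - h ≠ 0 := sub_ne_zero.mpr (Ne.symm hhk)
  refine core_ineq (one_le_znorm hh0) (one_le_znorm hkh0) (znorm_nonneg k) hn ?_ ?_ ?_
  · -- triangle : znorm k ≤ znorm h + znorm (k - h)
    rw [znorm_eq_norm, znorm_eq_norm, znorm_eq_norm]
    have : emb k = emb h + (emb k - emb h) := by abel
    calc ‖emb k‖ = ‖emb h + (emb k - emb h)‖ := by rw [← this]
      _ ≤ ‖emb h‖ + ‖emb k - emb h‖ := norm_add_le _ _
      _ = ‖emb h‖ + ‖emb (k - h)‖ := by rw [emb_sub]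
  · rw [znorm_eq_norm, znorm_eq_norm, znorm_eq_norm]
    have := abs_norm_sub_norm_le (emb k) (emb (k - h))
    have e : emb k - emb (k - h) = emb h := by rw [emb_sub]; abel
    rwa [e] at this
  · rw [wedgeSq_sub]
    exact wedgeSq_le h (k - h)

/-- Summability of `z ↦ (max |z| 1)^(-q)` over `ℤ` for `q > 1`. -/
lemma summable_gz {q : ℝ} (hq : 1 < q) :
    Summable fun z : ℤ => max |(z : ℝ)| 1 ^ (-q) := by
  have h0 := Real.summable_abs_int_rpow hq
  have h1 := (h0.hasSum.update 0 1).summable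
  refine h1.congr fun z => ?_
  by_cases hz : z = 0
  · subst hz
    simp [Function.update_self, Real.rpow_neg, Real.one_rpow]
  · rw [Function.update_of_ne hz]
    congr 1
    have : (1:ℝ) ≤ |(z:ℝ)| := by
      have : (1:ℤ) ≤ |z| := Int.one_le_abs (by simpa using hz)
      calc (1:ℝ) ≤ (|z| : ℤ) := by exact_mod_cast this
        _ = |(z:ℝ)| := by push_cast; rfl
    rw [max_eq_left this]

/-- Summability of the product function over `ℤ^d`. -/
lemma summable_prod_gz (d : ℕ) {q : ℝ} (hq : 1 < q) :
    Summable fun h : Fin d → ℤ => ∏ i, max |(h i : ℝ)| 1 ^ (-q) := by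
  induction d with
  | zero => exact .of_finite
  | succ d ih =>
    have hg : ∀ z : ℤ, 0 ≤ max |(z : ℝ)| 1 ^ (-q) :=
      fun z => Real.rpow_nonneg (le_trans zero_le_one (le_max_right _ _)) _
    have hF : Summable fun pz : ℤ × (Fin d → ℤ) =>
        max |(pz.1 : ℝ)| 1 ^ (-q) * ∏ i, max |(pz.2 i : ℝ)| 1 ^ (-q) :=
      by
      apply Summable.mul_of_nonneg (summable_gz hq) ih (fun z => hg z)
      exact fun v => Finset.prod_nonneg fun i _ => hg _
    have h2 : Summable ((fun pz : ℤ × (Fin d → ℤ) =>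
        max |(pz.1 : ℝ)| 1 ^ (-q) * ∏ i, max |(pz.2 i : ℝ)| 1 ^ (-q)) ∘
        (Fin.consEquiv fun _ => ℤ).symm) := (Equiv.summable_iff _).mpr hF
    refine h2.congr fun h => ?_
    simp only [Function.comp_apply, Fin.consEquiv, Equiv.coe_fn_symm_mk]
    rw [Fin.prod_univ_succ]
    rfl

/-- Summability of `h ↦ znorm h ^ (-p)` over `ℤ^d` for `p > d ≥ 1`. -/
lemma summable_znorm {d : ℕ} (hd : 1 ≤ d) {p : ℝ} (hp : (d:ℝ) < p) :
    Summable fun h : Fin d → ℤ => znorm h ^ (-p) := by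
  have hd0 : (0:ℝ) < d := by exact_mod_cast hd
  set q := p / d with hq
  have hq1 : 1 < q := (one_lt_div hd0).mpr hp
  have hq0 : 0 < q := lt_trans one_pos hq1
  refine (summable_prod_gz d hq1).of_nonneg_of_le
    (fun h => Real.rpow_nonneg (znorm_nonneg h) _) fun h => ?_
  by_cases hh : h = 0
  · subst hh
    have : znorm (0 : Fin d → ℤ) = 0 := by simp [znorm]
    rw [this, Real.zero_rpow (by intro hcon; rw [neg_eq_zero] at hcon; linarith)]
    exact Finset.prod_nonneg fun i _ =>
      Real.rpow_nonneg (le_trans zero_le_one (le_max_right _ _)) _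
  · have hz1 : 1 ≤ znorm h := one_le_znorm hh
    have hz0 : 0 < znorm h := lt_of_lt_of_le one_pos hz1
    have key : ∏ i, max |(h i : ℝ)| 1 ≤ znorm h ^ (d:ℕ) := by
      calc ∏ i, max |(h i : ℝ)| 1 ≤ ∏ _i : Fin d, znorm h := by
            refine Finset.prod_le_prod (fun i _ => le_trans zero_le_one (le_max_right _ _))
              fun i _ => max_le (abs_le_znorm h i) hz1
        _ = znorm h ^ (d:ℕ) := by simp [Finset.prod_const, Finset.card_univ]
    have hprodpos : 0 < ∏ i, max |(h i : ℝ)| 1 :=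
      Finset.prod_pos fun i _ => lt_of_lt_of_le one_pos (le_max_right _ _)
    have h1 : znorm h ^ (-p) = (znorm h ^ (d:ℕ)) ^ (-q) := by
      rw [← Real.rpow_natCast (znorm h) d, ← Real.rpow_mul (znorm_nonneg h)]
      congr 1
      field_simp [hq]
      rw [hq]; field_simp
    rw [h1]
    calc (znorm h ^ (d:ℕ)) ^ (-q) ≤ (∏ i, max |(h i : ℝ)| 1) ^ (-q) :=
          Real.rpow_le_rpow_of_nonpos hprodpos key (neg_nonpos.mpr hq0.le)
      _ = ∏ i, max |(h i : ℝ)| 1 ^ (-q) :=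
          (Real.finset_prod_rpow _ _ (fun i _ => le_trans zero_le_one (le_max_right _ _)) _).symm

/-- for `n > d/2 + 1`, `sup_{k ∈ ℤ^d_0} G_n(k) < ∞`. -/
theorem stmt18 (d : ℕ) (hd : 2 ≤ d) (n : ℝ) (hn : (d : ℝ) / 2 + 1 < n) :
    (⨆ k : {k : Fin d → ℤ // k ≠ 0}, Gn d n k.1) < ⊤ := by
  have hd2 : (2:ℝ) ≤ (d:ℝ) := by exact_mod_cast hd
  have hn1 : 1 ≤ n := by linarith
  have hp : (d:ℝ) < 2 * n - 2 := by linarith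
  have hsum : Summable fun h : Fin d → ℤ => znorm h ^ (-(2 * n - 2)) :=
    summable_znorm (by omega) hp
  have hC0 : (0:ℝ) ≤ n ^ 2 * 2 ^ (2 * n - 2) := by positivity
  have hTne : (∑' h : {h : Fin d → ℤ // h ≠ 0},
      ENNReal.ofReal (znorm h.1 ^ (-(2 * n - 2)))) ≠ ⊤ := by
    have hs : Summable fun h : {h : Fin d → ℤ // h ≠ 0} => znorm h.1 ^ (-(2 * n - 2)) :=
      hsum.subtype _
    rw [← ENNReal.ofReal_tsum_of_nonneg
      (fun h => Real.rpow_nonneg (znorm_nonneg _) _) hs]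
    exact ENNReal.ofReal_ne_top
  have hbound : ∀ k : {k : Fin d → ℤ // k ≠ 0}, Gn d n k.1 ≤
      ENNReal.ofReal (n ^ 2 * 2 ^ (2 * n - 2)) *
        ((∑' h : {h : Fin d → ℤ // h ≠ 0}, ENNReal.ofReal (znorm h.1 ^ (-(2 * n - 2)))) +
          ∑' h : {h : Fin d → ℤ // h ≠ 0}, ENNReal.ofReal (znorm h.1 ^ (-(2 * n - 2)))) := by
    intro k
    have step1 : Gn d n k.1 ≤
        ∑' h : {h : Fin d → ℤ // h ≠ 0 ∧ h ≠ k.1},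
          (ENNReal.ofReal (n ^ 2 * 2 ^ (2 * n - 2) * znorm h.1 ^ (-(2 * n - 2))) +
            ENNReal.ofReal (n ^ 2 * 2 ^ (2 * n - 2) * znorm (k.1 - h.1) ^ (-(2 * n - 2)))) := by
      apply ENNReal.tsum_le_tsum
      intro h
      rw [← ENNReal.ofReal_add (mul_nonneg hC0 (Real.rpow_nonneg (znorm_nonneg _) _))
        (mul_nonneg hC0 (Real.rpow_nonneg (znorm_nonneg _) _))]
      apply ENNReal.ofReal_le_ofReal
      have ht := term_le hn1 k.1 h.1 h.2.1 h.2.2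
      calc wedgeSq h.1 k.1 * (znorm k.1 ^ n - znorm (k.1 - h.1) ^ n) ^ 2 /
            (znorm h.1 ^ (2 * n + 2) * znorm (k.1 - h.1) ^ (2 * n))
          ≤ n ^ 2 * 2 ^ (2 * n - 2) *
            (znorm h.1 ^ (-(2 * n - 2)) + znorm (k.1 - h.1) ^ (-(2 * n - 2))) := ht
        _ = n ^ 2 * 2 ^ (2 * n - 2) * znorm h.1 ^ (-(2 * n - 2)) +
            n ^ 2 * 2 ^ (2 * n - 2) * znorm (k.1 - h.1) ^ (-(2 * n - 2)) := mul_add _ _ _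
    have hi1 : Function.Injective (fun h : {h : Fin d → ℤ // h ≠ 0 ∧ h ≠ k.1} =>
        (⟨h.1, h.2.1⟩ : {h : Fin d → ℤ // h ≠ 0})) := by
      intro a b hab
      have h2 : (⟨a.1, a.2.1⟩ : {h : Fin d → ℤ // h ≠ 0}) = ⟨b.1, b.2.1⟩ := hab
      have h3 : a.1 = b.1 := by injection h2
      exact Subtype.ext h3
    have hi2 : Function.Injective (fun h : {h : Fin d → ℤ // h ≠ 0 ∧ h ≠ k.1} =>
        (⟨k.1 - h.1, sub_ne_zero.mpr (Ne.symm h.2.2)⟩ : {h : Fin d → ℤ // h ≠ 0})) := by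
      intro a b hab
      have h2' : (⟨k.1 - a.1, sub_ne_zero.mpr (Ne.symm a.2.2)⟩ : {h : Fin d → ℤ // h ≠ 0}) =
          ⟨k.1 - b.1, sub_ne_zero.mpr (Ne.symm b.2.2)⟩ := hab
      have h2 : k.1 - a.1 = k.1 - b.1 := by injection h2'
      exact Subtype.ext (sub_right_injective h2)
    have hA : ∑' h : {h : Fin d → ℤ // h ≠ 0 ∧ h ≠ k.1},
        ENNReal.ofReal (n ^ 2 * 2 ^ (2 * n - 2) * znorm h.1 ^ (-(2 * n - 2))) ≤
        ENNReal.ofReal (n ^ 2 * 2 ^ (2 * n - 2)) *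
          ∑' h : {h : Fin d → ℤ // h ≠ 0}, ENNReal.ofReal (znorm h.1 ^ (-(2 * n - 2))) := by
      have e : ∀ h : {h : Fin d → ℤ // h ≠ 0 ∧ h ≠ k.1},
          ENNReal.ofReal (n ^ 2 * 2 ^ (2 * n - 2) * znorm h.1 ^ (-(2 * n - 2))) =
            ENNReal.ofReal (n ^ 2 * 2 ^ (2 * n - 2)) *
              ENNReal.ofReal (znorm h.1 ^ (-(2 * n - 2))) :=
        fun h => ENNReal.ofReal_mul hC0
      rw [tsum_congr e, ENNReal.tsum_mul_left]
      refine mul_le_mul_right ?_ _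
      exact ENNReal.tsum_comp_le_tsum_of_injective hi1
        (fun m : {h : Fin d → ℤ // h ≠ 0} => ENNReal.ofReal (znorm m.1 ^ (-(2 * n - 2))))
    have hB : ∑' h : {h : Fin d → ℤ // h ≠ 0 ∧ h ≠ k.1},
        ENNReal.ofReal (n ^ 2 * 2 ^ (2 * n - 2) * znorm (k.1 - h.1) ^ (-(2 * n - 2))) ≤
        ENNReal.ofReal (n ^ 2 * 2 ^ (2 * n - 2)) *
          ∑' h : {h : Fin d → ℤ // h ≠ 0}, ENNReal.ofReal (znorm h.1 ^ (-(2 * n - 2))) := by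
      have e : ∀ h : {h : Fin d → ℤ // h ≠ 0 ∧ h ≠ k.1},
          ENNReal.ofReal (n ^ 2 * 2 ^ (2 * n - 2) * znorm (k.1 - h.1) ^ (-(2 * n - 2))) =
            ENNReal.ofReal (n ^ 2 * 2 ^ (2 * n - 2)) *
              ENNReal.ofReal (znorm (k.1 - h.1) ^ (-(2 * n - 2))) :=
        fun h => ENNReal.ofReal_mul hC0
      rw [tsum_congr e, ENNReal.tsum_mul_left]
      refine mul_le_mul_right ?_ _
      exact ENNReal.tsum_comp_le_tsum_of_injective hi2
        (fun m : {h : Fin d → ℤ // h ≠ 0} => ENNReal.ofReal (znorm m.1 ^ (-(2 * n - 2))))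
    calc Gn d n k.1 ≤ _ := step1
      _ = (∑' h : {h : Fin d → ℤ // h ≠ 0 ∧ h ≠ k.1},
            ENNReal.ofReal (n ^ 2 * 2 ^ (2 * n - 2) * znorm h.1 ^ (-(2 * n - 2)))) +
          ∑' h : {h : Fin d → ℤ // h ≠ 0 ∧ h ≠ k.1},
            ENNReal.ofReal (n ^ 2 * 2 ^ (2 * n - 2) * znorm (k.1 - h.1) ^ (-(2 * n - 2))) :=
        ENNReal.tsum_add
      _ ≤ _ := by rw [mul_add]; exact add_le_add hA hB
  refine lt_of_le_of_lt (iSup_le hbound) ?_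
  have hTlt : (∑' h : {h : Fin d → ℤ // h ≠ 0},
      ENNReal.ofReal (znorm h.1 ^ (-(2 * n - 2)))) < ⊤ := lt_top_iff_ne_top.mpr hTne
  exact ENNReal.mul_lt_top ENNReal.ofReal_lt_top (ENNReal.add_lt_top.mpr ⟨hTlt, hTlt⟩)
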